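/- Two signed graphs on the same underlying graph are switching equivalent if and only if they have the same set of balanced cycles (equivalently, every cycle has the same sign in both signed graphs). -/

import Mathlib

/-- The sign of a walk in a signed graph: the product of the edge signs along the walk. -/
def walkSign {V : Type*} {G : SimpleGraph V} (σ : V → V → ℝ) {u v : V} (p : G.Walk u v) : ℝ :=
  (p.darts.map fun d => σ d.toProd.1 d.toProd.2).prod

section ZasAux

open SimpleGraph

variable {V : Type*} {G : SimpleGraph V}

@[simp] lemma walkSign_nil (σ : V → V → ℝ) {v : V} :
    walkSign σ (Walk.nil : G.Walk v v) = 1 := rfl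

@[simp] lemma walkSign_cons (σ : V → V → ℝ) {u v w : V} (h : G.Adj u v) (p : G.Walk v w) :
    walkSign σ (Walk.cons h p) = σ u v * walkSign σ p := by
  simp [walkSign]

lemma walkSign_append (σ : V → V → ℝ) {u v w : V} (p : G.Walk u v) (q : G.Walk v w) :
    walkSign σ (p.append q) = walkSign σ p * walkSign σ q := by
  simp [walkSign, Walk.darts_append]

lemma walkSign_copy (σ : V → V → ℝ) {u v u' v' : V} (p : G.Walk u v) (hu : u = u') (hv : v = v') :
    walkSign σ (p.copy hu hv) = walkSign σ p := by
  simp [walkSign, Walk.darts_copy]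

lemma walkSign_rotate [DecidableEq V] (σ : V → V → ℝ) {u v : V} (c : G.Walk v v) (h : u ∈ c.support) :
    walkSign σ (c.rotate u h) = walkSign σ c :=
  (((Walk.rotate_darts c u h).map _).perm).prod_eq

lemma walkSign_reverse (σ : V → V → ℝ) (hsym : ∀ i j, σ i j = σ j i) {u v : V}
    (p : G.Walk u v) : walkSign σ p.reverse = walkSign σ p := by
  unfold walkSign
  rw [Walk.darts_reverse, List.map_reverse, List.prod_reverse, List.map_map]
  congr 1
  apply List.map_congr_left
  intro d _
  simp [SimpleGraph.Dart.symm, hsym d.toProd.1 d.toProd.2]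

lemma walkSign_mul (σ₁ σ₂ : V → V → ℝ) {u v : V} (p : G.Walk u v) :
    walkSign (fun i j => σ₁ i j * σ₂ i j) p = walkSign σ₁ p * walkSign σ₂ p := by
  induction p with
  | nil => simp
  | cons h q ih => simp [ih]; ring

lemma walkSign_pm (σ : V → V → ℝ) (hval : ∀ i j, G.Adj i j → σ i j = 1 ∨ σ i j = -1)
    {u v : V} (p : G.Walk u v) : walkSign σ p = 1 ∨ walkSign σ p = -1 := by
  induction p with
  | nil => left; rfl
  | cons h q ih =>
    rcases hval _ _ h with h1 | h1 <;> rcases ih with h2 | h2 <;>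
      simp [h1, h2]

lemma walkSign_mul_self (σ : V → V → ℝ) (hval : ∀ i j, G.Adj i j → σ i j = 1 ∨ σ i j = -1)
    {u v : V} (p : G.Walk u v) : walkSign σ p * walkSign σ p = 1 := by
  rcases walkSign_pm σ hval p with h | h <;> rw [h] <;> norm_num

/-- Key lemma: if every cycle has sign 1, then every closed walk has sign 1. -/
lemma closed_sign_one (τ : V → V → ℝ) (hsym : ∀ i j, τ i j = τ j i)
    (hval : ∀ i j, G.Adj i j → τ i j = 1 ∨ τ i j = -1)
    (hcyc : ∀ (v : V) (p : G.Walk v v), p.IsCycle → walkSign τ p = 1) :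
    ∀ (n : ℕ) (v : V) (c : G.Walk v v), c.length ≤ n → walkSign τ c = 1 := by
  classical
  intro n
  induction n with
  | zero =>
    intro v c hc
    cases c with
    | nil => rfl
    | cons h q => simp at hc
  | succ n ih =>
    intro v c hc
    cases c with
    | nil => rfl
    | cons h q =>
      rename_i w
      by_cases hnd : (Walk.cons h q).support.tail.Nodup
      · -- the support (minus start) has no duplicates
        rw [Walk.support_cons, List.tail_cons] at hnd
        have hq : q.IsPath := Walk.IsPath.mk' hnd
        by_cases hedge : s(v, w) ∈ q.edges
        · -- then q has length 1; direct computation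
          cases q with
          | nil => simp at hedge
          | cons h' r =>
            rename_i x
            rw [Walk.edges_cons, List.mem_cons] at hedge
            rcases hedge with hedge | hedge
            · rw [Sym2.eq_iff] at hedge
              rcases hedge with ⟨hvw, _⟩ | ⟨hvx, _⟩
              · exact absurd hvw h.ne
              · -- x = v, so r : Walk v v is a path, hence nil
                subst hvx
                have hr : r = Walk.nil := by
                  cases r with
                  | nil => rfl
                  | cons h'' s =>
                    exfalso
                    have : v ∈ s.support ∨ True := Or.inl s.end_mem_support
                    have hn := hq.support_nodup
                    rw [Walk.support_cons, Walk.support_cons] at hn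
                    simp only [List.nodup_cons] at hn
                    exact hn.2.1 (by simp [s.end_mem_support])
                subst hr
                simp only [walkSign_cons, walkSign_nil, mul_one]
                rw [hsym w v]
                rcases hval v w h with h1 | h1 <;> rw [h1] <;> norm_num
            · exfalso
              have : v ∈ r.support := by
                have : s(v, w) = s(w, v) := Sym2.eq_swap
                exact Walk.fst_mem_support_of_mem_edges r hedge
              have hn := hq.support_nodup
              rw [Walk.support_cons] at hn
              simp only [List.nodup_cons] at hn
              -- v is the endpoint of r and also... need: v appears twice?
              have hw : w ∈ r.support :=
                Walk.fst_mem_support_of_mem_edges r (by rwa [Sym2.eq_swap] at hedge)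
              exact hn.1 hw
        · -- it's a cycle
          have hcyc' : (Walk.cons h q).IsCycle :=
            (Walk.cons_isCycle_iff q h).mpr ⟨hq, hedge⟩
          exact hcyc v _ hcyc'
      · -- a repeated vertex: rotate and split
        rw [Walk.length_cons] at hc
        obtain ⟨u, hu⟩ := List.exists_duplicate_iff_not_nodup.mpr hnd
        classical
        have hcount : 2 ≤ List.count u (Walk.cons h q).support.tail :=
          List.duplicate_iff_two_le_count.mp hu
        have humem : u ∈ (Walk.cons h q).support :=
          List.mem_of_mem_tail (hu.mem)
        set c' := (Walk.cons h q).rotate u humem with hc'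
        have hlenc' : c'.length = (Walk.cons h q).length := by
          have := ((Walk.rotate_darts (Walk.cons h q) u humem).perm).length_eq
          rwa [Walk.length_darts, Walk.length_darts] at this
        have hcount' : 2 ≤ List.count u c'.support.tail :=
          ((Walk.support_rotate (Walk.cons h q) u humem).perm.count_eq u).symm ▸ hcount
        have hsign : walkSign τ c' = walkSign τ (Walk.cons h q) :=
          walkSign_rotate τ _ humem
        rw [← hsign]
        cases hc2 : c' with
        | nil =>
          rw [hc2] at hcount'
          simp at hcount'
        | cons h₂ q₂ =>
          rename_i y
          rw [hc2] at hcount'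
          rw [Walk.support_cons, List.tail_cons] at hcount'
          have hm : u ∈ q₂.support := List.count_pos_iff.mp (by omega)
          have hspec := q₂.take_spec hm
          have hcnt1 : List.count u (q₂.takeUntil u hm).support = 1 :=
            q₂.count_support_takeUntil_eq_one hm
          have hsupp : q₂.support
              = (q₂.takeUntil u hm).support ++ (q₂.dropUntil u hm).support.tail := by
            rw [← Walk.support_append, hspec]
          have hcntd : 1 ≤ List.count u (q₂.dropUntil u hm).support.tail := by
            rw [hsupp, List.count_append] at hcount'
            omega
          have hdnil : 1 ≤ (q₂.dropUntil u hm).length := by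
            cases hd : q₂.dropUntil u hm with
            | nil => rw [hd] at hcntd; simp at hcntd
            | cons _ _ => simp [Walk.length_cons]
          have hlensum : 1 + (q₂.takeUntil u hm).length + (q₂.dropUntil u hm).length
              = c'.length := by
            rw [hc2, Walk.length_cons]
            have := congrArg Walk.length hspec
            rw [Walk.length_append] at this
            omega
          have hlen1 : (Walk.cons h₂ (q₂.takeUntil u hm)).length ≤ n := by
            rw [Walk.length_cons]
            rw [hlenc', Walk.length_cons] at hlensum
            omega
          have hlen2 : (q₂.dropUntil u hm).length ≤ n := by
            rw [hlenc', Walk.length_cons] at hlensum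
            omega
          have e1 := ih u (Walk.cons h₂ (q₂.takeUntil u hm)) hlen1
          have e2 := ih u (q₂.dropUntil u hm) hlen2
          calc walkSign τ (Walk.cons h₂ q₂)
              = walkSign τ (Walk.cons h₂ ((q₂.takeUntil u hm).append (q₂.dropUntil u hm))) := by
                rw [hspec]
            _ = walkSign τ (Walk.cons h₂ (q₂.takeUntil u hm))
                * walkSign τ (q₂.dropUntil u hm) := by
                rw [walkSign_cons, walkSign_append, walkSign_cons]; ring
            _ = 1 := by rw [e1, e2, one_mul]

lemma walkSign_eq_of_same_ends (τ : V → V → ℝ) (hsym : ∀ i j, τ i j = τ j i)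
    (hval : ∀ i j, G.Adj i j → τ i j = 1 ∨ τ i j = -1)
    (hcyc : ∀ (v : V) (p : G.Walk v v), p.IsCycle → walkSign τ p = 1)
    {a b : V} (p q : G.Walk a b) : walkSign τ p = walkSign τ q := by
  have h1 : walkSign τ (p.append q.reverse) = 1 :=
    closed_sign_one τ hsym hval hcyc (p.append q.reverse).length a _ le_rfl
  rw [walkSign_append, walkSign_reverse τ hsym] at h1
  have h2 : walkSign τ q * walkSign τ q = 1 := walkSign_mul_self τ hval q
  calc walkSign τ p = walkSign τ p * (walkSign τ q * walkSign τ q) := by rw [h2, mul_one]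
    _ = (walkSign τ p * walkSign τ q) * walkSign τ q := by ring
    _ = walkSign τ q := by rw [h1, one_mul]

end ZasAux

/-- Zaslavsky's lemma: two signed graphs `(G, σ₁)` and `(G, σ₂)` on the same underlying graph
are switching equivalent if and only if every cycle has the same sign in both signed graphs
(equivalently, they have the same set of balanced cycles). -/
theorem stmt4 {V : Type*} (G : SimpleGraph V) (σ₁ σ₂ : V → V → ℝ)
    (hsym₁ : ∀ i j, σ₁ i j = σ₁ j i) (hsym₂ : ∀ i j, σ₂ i j = σ₂ j i)
    (hval₁ : ∀ i j, G.Adj i j → σ₁ i j = 1 ∨ σ₁ i j = -1)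
    (hval₂ : ∀ i j, G.Adj i j → σ₂ i j = 1 ∨ σ₂ i j = -1) :
    (∃ sw : V → ℝ, (∀ v, sw v = 1 ∨ sw v = -1) ∧
        ∀ i j, G.Adj i j → σ₂ i j = sw i * σ₁ i j * sw j) ↔
      (∀ (v : V) (p : G.Walk v v), p.IsCycle → walkSign σ₁ p = walkSign σ₂ p) := by
  classical
  constructor
  · rintro ⟨sw, hsw, hrel⟩ v p _
    have key : ∀ {a b : V} (q : G.Walk a b),
        walkSign σ₂ q = sw a * walkSign σ₁ q * sw b := by
      intro a b q
      induction q with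
      | nil =>
        rename_i x
        simp only [walkSign_nil, mul_one]
        rcases hsw x with h | h <;> rw [h] <;> norm_num
      | cons h q ih =>
        rename_i x y z
        rw [walkSign_cons, walkSign_cons, ih, hrel _ _ h]
        have : sw y * sw y = 1 := by rcases hsw y with h' | h' <;> rw [h'] <;> norm_num
        calc sw x * σ₁ x y * sw y * (sw y * walkSign σ₁ q * sw z)
            = (sw y * sw y) * (sw x * (σ₁ x y * walkSign σ₁ q) * sw z) := by ring
          _ = sw x * (σ₁ x y * walkSign σ₁ q) * sw z := by rw [this, one_mul]
    have h1 : sw v * sw v = 1 := by rcases hsw v with h' | h' <;> rw [h'] <;> norm_num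
    rw [key p]
    calc walkSign σ₁ p = (sw v * sw v) * walkSign σ₁ p := by rw [h1, one_mul]
      _ = sw v * walkSign σ₁ p * sw v := by ring
  · intro hcyc
    set τ : V → V → ℝ := fun i j => σ₁ i j * σ₂ i j with hτ
    have hsymτ : ∀ i j, τ i j = τ j i := fun i j => by
      simp only [hτ, hsym₁ i j, hsym₂ i j]
    have hvalτ : ∀ i j, G.Adj i j → τ i j = 1 ∨ τ i j = -1 := by
      intro i j h
      rcases hval₁ i j h with h1 | h1 <;> rcases hval₂ i j h with h2 | h2 <;>
        simp [hτ, h1, h2]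
    have hcycτ : ∀ (v : V) (p : G.Walk v v), p.IsCycle → walkSign τ p = 1 := by
      intro v p hp
      rw [hτ, walkSign_mul, ← hcyc v p hp]
      exact walkSign_mul_self σ₁ hval₁ p
    -- root of each connected component
    set r : V → V := fun v => Quot.out (G.connectedComponentMk v) with hr
    have hreach : ∀ v, G.Reachable (r v) v := by
      intro v
      apply SimpleGraph.ConnectedComponent.exact
      exact Quot.out_eq _
    set sw : V → ℝ := fun v => walkSign τ (hreach v).some with hswdef
    refine ⟨sw, fun v => walkSign_pm τ hvalτ _, ?_⟩
    intro i j hij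
    have hrij : r i = r j := by
      simp only [hr]
      congr 1
      exact SimpleGraph.ConnectedComponent.connectedComponentMk_eq_of_adj hij
    -- sw j equals sw i * τ i j
    have key : sw j = sw i * τ i j := by
      have hwalk : walkSign τ ((hreach j).some)
          = walkSign τ ((((hreach i).some).append (SimpleGraph.Walk.cons hij SimpleGraph.Walk.nil)).copy hrij rfl) :=
        walkSign_eq_of_same_ends τ hsymτ hvalτ hcycτ _ _
      rw [hswdef]
      simp only
      rw [hwalk, walkSign_copy, walkSign_append, walkSign_cons, walkSign_nil, mul_one]
    have h1 : sw i * sw i = 1 := by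
      rcases walkSign_pm τ hvalτ (hreach i).some with h' | h' <;>
        simp only [hswdef] <;> rw [h'] <;> norm_num
    have h2 : σ₁ i j * σ₁ i j = 1 := by
      rcases hval₁ i j hij with h' | h' <;> rw [h'] <;> norm_num
    rw [key]
    calc σ₂ i j = (sw i * sw i) * ((σ₁ i j * σ₁ i j) * σ₂ i j) := by rw [h1, h2]; ring
      _ = sw i * σ₁ i j * (sw i * τ i j) := by rw [hτ]; ring
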